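/- The space X[λ, μ, 𝒜, C̄] is scattered: it is right-separated by the lexicographic ordering on λ × κ, i.e., every nonempty subset contains a point isolated in that subset. -/

import Mathlib

open Set Ordinal Cardinal Topology

noncomputable section

namespace DSoukupPaper

/-- The set `S^λ_μ` of ordinals below `lam` of cofinality `mu`. -/
def Sset (lam : Ordinal.{0}) (mu : Cardinal.{0}) : Set Ordinal := {α | α < lam ∧ α.cof = mu}

/-- `C` is a club in the ordinal `o`. -/
def IsClubBelow (C : Set Ordinal.{0}) (o : Ordinal.{0}) : Prop :=
  C ⊆ Set.Iio o ∧ (∀ β < o, ∃ γ ∈ C, β ≤ γ) ∧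
    (∀ β < o, Order.IsSuccLimit β → (∀ γ < β, ∃ δ ∈ C, γ < δ ∧ δ < β) → β ∈ C)

/-- `A` is nonstationary in the ordinal `o`. -/
def IsNonstationaryBelow (A : Set Ordinal.{0}) (o : Ordinal.{0}) : Prop :=
  ∃ C : Set Ordinal, IsClubBelow C o ∧ ∀ x ∈ A, x ∉ C

/-- `A` is stationary in the ordinal `o`. -/
def IsStationaryBelow (A : Set Ordinal.{0}) (o : Ordinal.{0}) : Prop :=
  ∀ C : Set Ordinal, IsClubBelow C o → ∃ x ∈ A, x ∈ C

/-- A `T₁` space is linearly D iff every nontrivial monotone open cover admits a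
closed discrete big set (Guo–Junnila characterization, taken as definition). -/
def LinearlyDSpace (Y : Type*) [TopologicalSpace Y] : Prop :=
  ∀ 𝒰 : Set (Set Y), (∀ U ∈ 𝒰, IsOpen U) → ⋃₀ 𝒰 = Set.univ →
    IsChain (· ⊆ ·) 𝒰 → (∀ U ∈ 𝒰, U ≠ Set.univ) →
    ∃ D : Set Y, IsClosed D ∧ DiscreteTopology D ∧ ∀ U ∈ 𝒰, ¬D ⊆ U

/-- The data of the construction `X[λ,μ,𝒜,C̄]`: cardinals `λ > μ = cf(μ)`,
a MAD family `𝒜 = {M^φ : φ < κ} ⊆ [μ]^μ`, and an `S^λ_μ`-club sequence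
`C̄ = ⟨C_α : α ∈ S^λ_μ⟩`, given via increasing enumerations `a α : μ → C_α`. -/
structure Setup where
  lam : Cardinal.{0}
  mu : Cardinal.{0}
  kappa : Cardinal.{0}
  mu_reg : mu.IsRegular
  mu_lt_lam : mu < lam
  /-- the MAD family: `M φ` for `φ < κ` -/
  M : Ordinal.{0} → Set Ordinal.{0}
  M_sub : ∀ φ < kappa.ord, M φ ⊆ Set.Iio mu.ord
  M_card : ∀ φ < kappa.ord, #(M φ) = Cardinal.lift.{1} mu
  M_ad : ∀ φ < kappa.ord, ∀ ψ < kappa.ord, φ ≠ ψ →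
    #(↥(M φ ∩ M ψ)) < Cardinal.lift.{1} mu
  M_mad : ∀ N ⊆ Set.Iio mu.ord, #N = Cardinal.lift.{1} mu →
    ∃ φ < kappa.ord, #(↥(N ∩ M φ)) = Cardinal.lift.{1} mu
  /-- the club sequence: `a α ξ` is the `ξ`-th element of `C_α` -/
  a : Ordinal.{0} → Ordinal.{0} → Ordinal.{0}
  a_mono : ∀ α ∈ Sset lam.ord mu, ∀ ξ < mu.ord, ∀ ζ < ξ, a α ζ < a α ξ
  a_lt : ∀ α ∈ Sset lam.ord mu, ∀ ξ < mu.ord, a α ξ < α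
  a_unbounded : ∀ α ∈ Sset lam.ord mu, ∀ β < α, ∃ ξ < mu.ord, β ≤ a α ξ
  a_closed : ∀ α ∈ Sset lam.ord mu, ∀ ξ < mu.ord, Order.IsSuccLimit ξ →
    IsLUB (a α '' Set.Iio ξ) (a α ξ)

namespace Setup

variable (P : Setup)

/-- `C_α` as a set. -/
def C (α : Ordinal) : Set Ordinal := P.a α '' Set.Iio P.mu.ord

open Classical in
/-- the interval `I^ξ_α`. -/
def I (α ξ : Ordinal) : Set Ordinal :=
  if Order.IsSuccLimit ξ then Set.Icc (P.a α ξ) (P.a α (ξ + 1)) else Set.Ioc (P.a α ξ) (P.a α (ξ + 1))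

/-- the underlying set of the space: a subset of `λ × κ`. -/
def Xset : Set (Ordinal × Ordinal) :=
  {p | p.1 < P.lam.ord ∧
    ((p.1 ∈ Sset P.lam.ord P.mu ∧ p.2 < P.kappa.ord) ∨
      (p.1 ∉ Sset P.lam.ord P.mu ∧ p.2 = 0))}

/-- the column `X_α` (as a set of pairs). -/
def col (α : Ordinal) : Set (Ordinal × Ordinal) := {p ∈ P.Xset | p.1 = α}

/-- basic neighborhood `U((α,φ),η)` for `α ∈ S^λ_μ`. -/
def U1 (α φ η : Ordinal) : Set (Ordinal × Ordinal) :=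
  {(α, φ)} ∪ ⋃ γ ∈ (⋃ ξ ∈ {ξ | ξ ∈ P.M φ ∧ η ≤ ξ}, P.I α ξ), P.col γ

/-- basic neighborhood `U(α,β) = ⋃{X_γ : β < γ ≤ α}`. -/
def U3 (α β : Ordinal) : Set (Ordinal × Ordinal) := ⋃ γ ∈ Set.Ioc β α, P.col γ

/-- the collection of basic open sets. -/
def basics : Set (Set (Ordinal × Ordinal)) :=
  {B | (∃ α ∈ Sset P.lam.ord P.mu, ∃ φ < P.kappa.ord, ∃ η < P.mu.ord, B = P.U1 α φ η) ∨
    (∃ α < P.lam.ord, α.cof < P.mu ∧ B = {(α, 0)}) ∨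
    (∃ α < P.lam.ord, P.mu < α.cof ∧ ∃ β < α, B = P.U3 α β)}

/-- the topology of `X[λ,μ,𝒜,C̄]`, generated by the basic open sets. -/
instance instTopo : TopologicalSpace ↥P.Xset :=
  TopologicalSpace.generateFrom {V | ∃ B ∈ P.basics, V = Subtype.val ⁻¹' B}

/-- the column `X_α` viewed inside the space. -/
def colS (α : Ordinal) : Set ↥P.Xset := {x | (x : Ordinal × Ordinal).1 = α}

/-- the projection `π(F) = {α < λ : F ∩ X_α ≠ ∅}`. -/
def pi (F : Set ↥P.Xset) : Set Ordinal := {α | ∃ x ∈ F, (x : Ordinal × Ordinal).1 = α}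

/-- `F` is unbounded iff `π(F)` is unbounded in `λ`. -/
def Unbounded (F : Set ↥P.Xset) : Prop := ∀ β < P.lam.ord, ∃ γ ∈ P.pi F, β < γ

/-- `F` is high enough iff `|{α < λ : |F_α| = |F|}| ≥ μ`. -/
def HighEnough (F : Set ↥P.Xset) : Prop :=
  Cardinal.lift.{1} P.mu ≤ #({α | #(↥(F ∩ P.colS α)) = #F} : Set Ordinal)

end Setup
end DSoukupPaper

namespace DSoukupPaper

/-- The space `X[λ,μ,𝒜,C̄]` is scattered: every nonempty subset has a point isolated in it. -/
theorem stmt9 (P : Setup) (F : Set ↥P.Xset) (hF : F.Nonempty) :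
    ∃ x ∈ F, ∃ V : Set ↥P.Xset, IsOpen V ∧ V ∩ F = {x} := by
  classical
  obtain ⟨x0, hx0⟩ := hF
  set A : Set Ordinal := {β | ∃ y ∈ F, (y : Ordinal × Ordinal).1 = β} with hA
  have hAne : A.Nonempty := ⟨(x0 : Ordinal × Ordinal).1, x0, hx0, rfl⟩
  obtain ⟨α, hαA, hαmin⟩ := Ordinal.lt_wf.has_min A hAne
  obtain ⟨x, hxF, hx1⟩ := hαA
  have hXα : (x : Ordinal × Ordinal) ∈ P.Xset := x.2
  have hα : α < P.lam.ord := by rw [← hx1]; exact hXα.1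
  have hμ0 : Cardinal.aleph0 ≤ P.mu := P.mu_reg.aleph0_le
  have hμlim : Order.IsSuccLimit P.mu.ord := Cardinal.isSuccLimit_ord hμ0
  suffices h : ∃ V : Set ↥P.Xset, IsOpen V ∧ x ∈ V ∧
      ∀ y ∈ V, (y : Ordinal × Ordinal).1 < α ∨ y = x by
    obtain ⟨V, hVo, hxV, hV⟩ := h
    refine ⟨x, hxF, V, hVo, ?_⟩
    ext y
    simp only [Set.mem_inter_iff, Set.mem_singleton_iff]
    constructor
    · rintro ⟨hyV, hyF⟩
      rcases hV y hyV with h' | h'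
      · exact absurd h' (hαmin _ ⟨y, hyF, rfl⟩)
      · exact h'
    · rintro rfl; exact ⟨hxV, hxF⟩
  by_cases hS : α ∈ Sset P.lam.ord P.mu
  · -- α ∈ S : use U1
    have hφ : (x : Ordinal × Ordinal).2 < P.kappa.ord := by
      rcases hXα.2 with h | h
      · exact h.2
      · exact absurd (hx1 ▸ hS) h.1
    set φ := (x : Ordinal × Ordinal).2 with hφdef
    have hxv : (x : Ordinal × Ordinal) = (α, φ) := by
      rw [← hx1]
    refine ⟨Subtype.val ⁻¹' (P.U1 α φ 0), ?_, ?_, ?_⟩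
    · exact TopologicalSpace.GenerateOpen.basic _
        ⟨P.U1 α φ 0, Or.inl ⟨α, hS, φ, hφ, 0, hμlim.pos, rfl⟩, rfl⟩
    · exact Or.inl (by simp [hxv])
    · intro y hy
      rcases hy with hy | hy
      · right
        apply Subtype.ext
        rw [hxv]; exact hy
      · left
        simp only [Set.mem_iUnion, exists_prop] at hy
        obtain ⟨γ, hγ, hyγ⟩ := hy
        simp only [Set.mem_iUnion, exists_prop, Set.mem_setOf_eq] at hγ
        obtain ⟨ξ, ⟨hξM, -⟩, hγI⟩ := hγ
        have hξ : ξ < P.mu.ord := P.M_sub φ hφ hξM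
        have hξ1 : ξ + 1 < P.mu.ord := by
          rw [Ordinal.add_one_eq_succ]
          exact hμlim.succ_lt hξ
        have hγle : γ ≤ P.a α (ξ + 1) := by
          unfold Setup.I at hγI
          split_ifs at hγI <;> exact hγI.2
        have : γ < α := lt_of_le_of_lt hγle (P.a_lt α hS (ξ + 1) hξ1)
        have hy1 : (y : Ordinal × Ordinal).1 = γ := hyγ.2
        rw [hy1]; exact this
  · have hx2 : (x : Ordinal × Ordinal).2 = 0 := by
      rcases hXα.2 with h | h
      · exact absurd (hx1 ▸ h.1) hS
      · exact h.2
    have hxv : (x : Ordinal × Ordinal) = (α, 0) := by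
      rw [← hx1, ← hx2]
    have hne : α.cof ≠ P.mu := fun h => hS ⟨hα, h⟩
    rcases hne.lt_or_gt with hcof | hcof
    · -- isolated point
      refine ⟨Subtype.val ⁻¹' {(α, 0)}, ?_, ?_, ?_⟩
      · exact TopologicalSpace.GenerateOpen.basic _
          ⟨{(α, 0)}, Or.inr (Or.inl ⟨α, hα, hcof, rfl⟩), rfl⟩
      · simp [hxv]
      · intro y hy
        right
        apply Subtype.ext
        rw [hxv]
        exact hy
    · -- cof α > μ : use U3
      have hα0 : 0 < α := by
        rcases eq_zero_or_pos α with rfl | h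
        · rw [Ordinal.cof_zero] at hcof
          exact absurd (lt_trans (lt_of_lt_of_le Cardinal.aleph0_pos hμ0) hcof)
            (lt_irrefl 0)
        · exact h
      refine ⟨Subtype.val ⁻¹' (P.U3 α 0), ?_, ?_, ?_⟩
      · exact TopologicalSpace.GenerateOpen.basic _
          ⟨P.U3 α 0, Or.inr (Or.inr ⟨α, hα, hcof, 0, hα0, rfl⟩), rfl⟩
      · show (x : Ordinal × Ordinal) ∈ P.U3 α 0
        simp only [Setup.U3, Set.mem_iUnion, exists_prop]
        exact ⟨α, ⟨hα0, le_refl α⟩, hXα, hx1⟩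
      · intro y hy
        simp only [Set.mem_preimage, Setup.U3, Set.mem_iUnion, exists_prop] at hy
        obtain ⟨γ, hγ, hyX, hy1⟩ := hy
        rcases lt_or_eq_of_le hγ.2 with h | h
        · left; rw [hy1]; exact h
        · right
          apply Subtype.ext
          have hy2 : (y : Ordinal × Ordinal).2 = 0 := by
            rcases hyX.2 with h' | h'
            · exact absurd ((hy1.trans h) ▸ h'.1) hS
            · exact h'.2
          rw [hxv, ← hy1.trans h, ← hy2]
end DSoukupPaper
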